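/- Let 𝔤 = 𝔥₃ ⊕ 𝔥₃, oriented by e¹∧e²∧e³∧f¹∧f²∧f³, and let ρ ∈ Λ³𝔤* be a closed stable 3-form, i.e., dρ = 0 and λ(ρ) ≠ 0. Then the 4-form d(J_ρ^*ρ) lies in Λ⁴U, where U = ker(d : Λ¹𝔤* → Λ²𝔤*) = span{e¹, e², f¹, f²} and (J_ρ^*ρ)(x,y,z) := ρ(J_ρ x, J_ρ y, J_ρ z). -/

import Mathlib

open Module TensorProduct

noncomputable section

namespace StableForms

variable {V : Type} [AddCommGroup V] [Module ℝ V]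

/-- The wedge product of two real-valued alternating forms
(in the determinant/shuffle convention). -/
def wedge {k l : ℕ} (f : V [⋀^Fin k]→ₗ[ℝ] ℝ) (g : V [⋀^Fin l]→ₗ[ℝ] ℝ) :
    V [⋀^Fin (k + l)]→ₗ[ℝ] ℝ :=
  ((TensorProduct.lid ℝ ℝ).toLinearMap.compAlternatingMap
    (f.domCoprod g)).domDomCongr finSumFinEquiv

/-- The one-form associated to a dual vector. -/
def oneForm (l : Module.Dual ℝ V) : V [⋀^Fin 1]→ₗ[ℝ] ℝ :=
  AlternatingMap.ofSubsingleton ℝ V ℝ 0 l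

/-- The wedge product of three one-forms. -/
def wedge3 (l1 l2 l3 : Module.Dual ℝ V) : V [⋀^Fin 3]→ₗ[ℝ] ℝ :=
  wedge (wedge (oneForm l1) (oneForm l2)) (oneForm l3)

/-- The canonical map `V ⊗ Λ⁶V* → Λ⁵V*`, `v ⊗ ν ↦ ι_v ν`; it is an isomorphism
when `dim V = 6`, and `κ` of the paper is its inverse. -/
def eps : V ⊗[ℝ] (V [⋀^Fin 6]→ₗ[ℝ] ℝ) →ₗ[ℝ] (V [⋀^Fin 5]→ₗ[ℝ] ℝ) :=
  TensorProduct.lift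
    ((AlternatingMap.curryLeftLinearMap :
      (V [⋀^Fin 6]→ₗ[ℝ] ℝ) →ₗ[ℝ] V →ₗ[ℝ] (V [⋀^Fin 5]→ₗ[ℝ] ℝ)).flip)

variable [FiniteDimensional ℝ V]

/-- The trace over `V` of a linear map `V → V ⊗ W`, with values in `W`
(independent of the choice of basis). -/
def trace2 {W : Type} [AddCommGroup W] [Module ℝ W] (f : V →ₗ[ℝ] V ⊗[ℝ] W) : W :=
  ∑ i : Fin (Module.finrank ℝ V),
    TensorProduct.lid ℝ W
      ((LinearMap.rTensor W ((Module.finBasis ℝ V).coord i)) (f (Module.finBasis ℝ V i)))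

/-- The square `K² : V → V ⊗ (W ⊗ W)` of a twisted endomorphism `K : V → V ⊗ W`. -/
def Ksq {W : Type} [AddCommGroup W] [Module ℝ W] (K : V →ₗ[ℝ] V ⊗[ℝ] W) :
    V →ₗ[ℝ] V ⊗[ℝ] (W ⊗[ℝ] W) :=
  (TensorProduct.assoc ℝ V W W).toLinearMap ∘ₗ (LinearMap.rTensor W K) ∘ₗ K

/-- The quartic invariant `λ(ρ) = (1/6)·tr(K_ρ²) ∈ (Λ⁶V*)^{⊗2}`, expressed in terms
of `K = K_ρ`. -/
def lam {W : Type} [AddCommGroup W] [Module ℝ W] (K : V →ₗ[ℝ] V ⊗[ℝ] W) : W ⊗[ℝ] W :=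
  (6 : ℝ)⁻¹ • trace2 (Ksq K)

/-- `K` is the map `K_ρ : V → V ⊗ Λ⁶V*` associated to the three-form `ρ`, characterised
by `K_ρ(v) = κ((ι_v ρ) ∧ ρ)`, i.e. `ε(K v) = (ι_v ρ) ∧ ρ` for the canonical map `ε = κ⁻¹`
(this determines `K` uniquely since `ε` is an isomorphism for `dim V = 6`). -/
def IsK (ρ : V [⋀^Fin 3]→ₗ[ℝ] ℝ)
    (K : V →ₗ[ℝ] V ⊗[ℝ] (V [⋀^Fin 6]→ₗ[ℝ] ℝ)) : Prop :=
  ∀ v : V, eps (K v) = wedge (ρ.curryLeft v) ρ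

/-- Positivity in the one-dimensional space `(Λ⁶V*)^{⊗2}`:
`x > 0` iff `x = s ⊗ s` for some `s ≠ 0`. -/
def IsPosTensor (x : (V [⋀^Fin 6]→ₗ[ℝ] ℝ) ⊗[ℝ] (V [⋀^Fin 6]→ₗ[ℝ] ℝ)) : Prop :=
  ∃ s : V [⋀^Fin 6]→ₗ[ℝ] ℝ, s ≠ 0 ∧ x = s ⊗ₜ[ℝ] s

/-- A six-form is positively oriented w.r.t. an orientation `o`. -/
def PosOriented (o : Orientation ℝ V (Fin 6)) (ν : V [⋀^Fin 6]→ₗ[ℝ] ℝ) : Prop :=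
  ∃ h : ν ≠ 0, rayOfNeZero ℝ ν h = o

/-- `φ` is the volume form `φ(ρ)` of the stable three-form `ρ` (with `K = K_ρ`):
positively oriented with `φ ⊗ φ = |λ(ρ)|`, i.e. `φ ⊗ φ = ± λ(ρ)`. -/
def IsVolOf (o : Orientation ℝ V (Fin 6))
    (K : V →ₗ[ℝ] V ⊗[ℝ] (V [⋀^Fin 6]→ₗ[ℝ] ℝ)) (φ : V [⋀^Fin 6]→ₗ[ℝ] ℝ) : Prop :=
  PosOriented o φ ∧ (φ ⊗ₜ[ℝ] φ = lam K ∨ φ ⊗ₜ[ℝ] φ = - lam K)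

/-- `J` is the endomorphism `J_ρ = K_ρ / φ(ρ)`, i.e. `K_ρ v = (J v) ⊗ φ(ρ)`. -/
def IsJ (K : V →ₗ[ℝ] V ⊗[ℝ] (V [⋀^Fin 6]→ₗ[ℝ] ℝ)) (φ : V [⋀^Fin 6]→ₗ[ℝ] ℝ)
    (J : V →ₗ[ℝ] V) : Prop :=
  ∀ v : V, K v = J v ⊗ₜ[ℝ] φ

/-- A real three-form is decomposable if it is a wedge product of three one-forms. -/
def Decomp3 (α : V [⋀^Fin 3]→ₗ[ℝ] ℝ) : Prop :=
  ∃ l1 l2 l3 : Module.Dual ℝ V, α = wedge3 l1 l2 l3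

end StableForms

noncomputable section

namespace H3H3

open StableForms

/-- The underlying 6-dimensional vector space of `𝔤 = 𝔥₃ ⊕ 𝔥₃`, with basis
`e₁, e₂, e₃, f₁, f₂, f₃` realised as the standard basis of `ℝ⁶` (indices `0,…,5`). -/
abbrev V6 : Type := Fin 6 → ℝ

/-- The dual basis one-forms `e¹, e², e³, f¹, f², f³` (indices `0,…,5`). -/
def p (i : Fin 6) : V6 [⋀^Fin 1]→ₗ[ℝ] ℝ := oneForm (LinearMap.proj i)

/-- `U = ker(d : Λ¹𝔤* → Λ²𝔤*) = span{e¹, e², f¹, f²}`. -/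
def U : Submodule ℝ (V6 [⋀^Fin 1]→ₗ[ℝ] ℝ) :=
  Submodule.span ℝ {p 0, p 1, p 3, p 4}

/-- `Λ⁴U`, the space of 4-forms spanned by wedge products of elements of `U`,
viewed as a subspace of `Λ⁴𝔤*`. -/
def quadU : Submodule ℝ (V6 [⋀^Fin 4]→ₗ[ℝ] ℝ) :=
  Submodule.span ℝ
    {x : V6 [⋀^Fin 4]→ₗ[ℝ] ℝ | ∃ a b c d : V6 [⋀^Fin 1]→ₗ[ℝ] ℝ,
      a ∈ U ∧ b ∈ U ∧ c ∈ U ∧ d ∈ U ∧ x = wedge (wedge (wedge a b) c) d}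

/-- The six-form `e¹∧e²∧e³∧f¹∧f²∧f³` orienting `𝔤`. -/
def E6 : V6 [⋀^Fin 6]→ₗ[ℝ] ℝ :=
  wedge (wedge (wedge (wedge (wedge (p 0) (p 1)) (p 2)) (p 3)) (p 4)) (p 5)

end H3H3


noncomputable section
namespace StableForms

variable {V : Type} [AddCommGroup V] [Module ℝ V]

set_option maxHeartbeats 1000000 in
set_option synthInstance.maxHeartbeats 1000000 in
theorem wedge_apply {k l : ℕ} (f : V [⋀^Fin k]→ₗ[ℝ] ℝ) (g : V [⋀^Fin l]→ₗ[ℝ] ℝ)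
    (v : Fin (k+l) → V) :
    wedge f g v = ((k.factorial * l.factorial : ℕ) : ℝ)⁻¹ *
      ∑ σ : Equiv.Perm (Fin k ⊕ Fin l), ((Equiv.Perm.sign σ : ℤ) : ℝ) *
        (f (fun i => v (finSumFinEquiv (σ (Sum.inl i)))) *
         g (fun i => v (finSumFinEquiv (σ (Sum.inr i))))) := by
  have h := congrArg (fun m : V [⋀^Fin k ⊕ Fin l]→ₗ[ℝ] (ℝ ⊗[ℝ] ℝ) =>
      TensorProduct.lid ℝ ℝ (m (fun i => v (finSumFinEquiv i))))
    (MultilinearMap.domCoprod_alternization_eq f g)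
  simp only [MultilinearMap.alternatization_apply] at h
  have hw : wedge f g v = TensorProduct.lid ℝ ℝ ((f.domCoprod g) (fun i => v (finSumFinEquiv i))) := rfl
  rw [Fintype.card_fin, Fintype.card_fin] at h
  have hsum : (TensorProduct.lid ℝ ℝ)
      (∑ σ : Equiv.Perm (Fin k ⊕ Fin l), Equiv.Perm.sign σ •
        ((f : MultilinearMap ℝ _ ℝ).domCoprod g).domDomCongr σ (fun i => v (finSumFinEquiv i)))
      = ∑ σ : Equiv.Perm (Fin k ⊕ Fin l), ((Equiv.Perm.sign σ : ℤ) : ℝ) *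
        (f (fun i => v (finSumFinEquiv (σ (Sum.inl i)))) *
         g (fun i => v (finSumFinEquiv (σ (Sum.inr i))))) := by
    rw [map_sum]
    refine Finset.sum_congr rfl fun σ _ => ?_
    rw [Units.smul_def, ← Int.cast_smul_eq_zsmul ℝ, map_smul]
    simp [MultilinearMap.domDomCongr_apply, MultilinearMap.domCoprod_apply, smul_eq_mul, mul_assoc]
  rw [hsum, AlternatingMap.smul_apply, ← Nat.cast_smul_eq_nsmul ℝ, map_smul] at h
  rw [hw, ← hw]
  have hc : ((k.factorial * l.factorial : ℕ) : ℝ) ≠ 0 := by positivity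
  rw [hw, h, smul_eq_mul, ← mul_assoc, inv_mul_cancel₀ hc, one_mul]


/-- `F` is the wedge of the one-forms `L 0, ..., L (N-1)` (determinant convention). -/
def IsDet {N : ℕ} (L : Fin N → Module.Dual ℝ V) (F : V [⋀^Fin N]→ₗ[ℝ] ℝ) : Prop :=
  ∀ v : Fin N → V, F v = ∑ τ : Equiv.Perm (Fin N), ((Equiv.Perm.sign τ : ℤ) : ℝ) *
    ∏ i, L i (v (τ i))

theorem isDet_oneForm (l : Module.Dual ℝ V) : IsDet ![l] (oneForm l) := by
  intro v
  rw [show (Finset.univ : Finset (Equiv.Perm (Fin 1))) = {1} from Finset.eq_singleton_iff_unique_mem.2 ⟨Finset.mem_univ _, fun x _ => Subsingleton.elim x 1⟩]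
  simp [oneForm]

theorem isDet_wedge {k l : ℕ} {A : Fin k → Module.Dual ℝ V} {B : Fin l → Module.Dual ℝ V}
    {f : V [⋀^Fin k]→ₗ[ℝ] ℝ} {g : V [⋀^Fin l]→ₗ[ℝ] ℝ}
    (hf : IsDet A f) (hg : IsDet B g) : IsDet (Fin.append A B) (wedge f g) := by
  intro v
  set G : Equiv.Perm (Fin k ⊕ Fin l) → ℝ := fun π => ((Equiv.Perm.sign π : ℤ) : ℝ) *
    ((∏ i, A i (v (finSumFinEquiv (π (Sum.inl i))))) *
     (∏ j, B j (v (finSumFinEquiv (π (Sum.inr j)))))) with hG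
  have key : wedge f g v = ((k.factorial * l.factorial : ℕ) : ℝ)⁻¹ *
      ∑ σ : Equiv.Perm (Fin k ⊕ Fin l), ∑ αβ : Equiv.Perm (Fin k) × Equiv.Perm (Fin l),
        G (σ * Equiv.Perm.sumCongr αβ.1 αβ.2) := by
    rw [wedge_apply]
    congr 1
    refine Finset.sum_congr rfl fun σ _ => ?_
    rw [hf, hg, Finset.sum_mul_sum, Finset.mul_sum, Fintype.sum_prod_type]
    refine Finset.sum_congr rfl fun α _ => ?_
    rw [Finset.mul_sum]
    refine Finset.sum_congr rfl fun β _ => ?_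
    rw [hG]
    simp only [Equiv.Perm.mul_apply, Equiv.Perm.sumCongr_apply, Sum.map_inl, Sum.map_inr,
      Equiv.Perm.sign_mul, Equiv.Perm.sign_sumCongr, Units.val_mul, Int.cast_mul]
    ring
  rw [key, Finset.sum_comm]
  have h2 : ∀ αβ : Equiv.Perm (Fin k) × Equiv.Perm (Fin l),
      (∑ σ : Equiv.Perm (Fin k ⊕ Fin l), G (σ * Equiv.Perm.sumCongr αβ.1 αβ.2)) = ∑ σ, G σ :=
    fun αβ => Fintype.sum_equiv (Equiv.mulRight (Equiv.Perm.sumCongr αβ.1 αβ.2)) _ _ (fun σ => rfl)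
  rw [Finset.sum_congr rfl (fun αβ _ => h2 αβ), Finset.sum_const, Finset.card_univ]
  have hcard : Fintype.card (Equiv.Perm (Fin k) × Equiv.Perm (Fin l)) = k.factorial * l.factorial := by
    simp [Fintype.card_perm]
  rw [hcard, nsmul_eq_mul, ← mul_assoc, inv_mul_cancel₀ (by positivity), one_mul]
  -- now identify ∑ G σ with the RHS over Perm (Fin (k+l))
  refine Fintype.sum_equiv finSumFinEquiv.permCongr _ _ fun π => ?_
  simp only [hG, Equiv.Perm.sign_permCongr]
  congr 1
  rw [← Equiv.prod_comp finSumFinEquiv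
    (fun m => Fin.append A B m (v (finSumFinEquiv.permCongr π m))), Fintype.prod_sum_type]
  congr 1
  · refine Finset.prod_congr rfl fun i _ => ?_
    rw [show finSumFinEquiv (Sum.inl i) = Fin.castAdd l i from finSumFinEquiv_apply_left i]
    rw [Fin.append_left]
    congr 2
    simp [Equiv.permCongr_apply]
  · refine Finset.prod_congr rfl fun j _ => ?_
    rw [show finSumFinEquiv (Sum.inr j) = Fin.natAdd k j from finSumFinEquiv_apply_right j]
    rw [Fin.append_right]
    congr 2
    simp [Equiv.permCongr_apply]


theorem IsDet.eval {N : ℕ} {L : Fin N → Module.Dual ℝ V} {F : V [⋀^Fin N]→ₗ[ℝ] ℝ}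
    (h : IsDet L F) (v : Fin N → V) :
    F v = Matrix.det (Matrix.of fun i j => L i (v j)) := by
  rw [h v, Matrix.det_apply']
  refine Fintype.sum_equiv (Equiv.inv (Equiv.Perm (Fin N))) _ _ fun τ => ?_
  congr 1
  · simp
  · show _ = ∏ i : Fin N, Matrix.of (fun i j => L i (v j)) (τ⁻¹ i) i
    rw [← Equiv.prod_comp τ (fun i => (Matrix.of fun i j => L i (v j)) (τ⁻¹ i) i)]
    simp

theorem IsDet.unique {N : ℕ} {L : Fin N → Module.Dual ℝ V} {F G : V [⋀^Fin N]→ₗ[ℝ] ℝ}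
    (hF : IsDet L F) (hG : IsDet L G) : F = G :=
  AlternatingMap.ext fun v => by rw [hF v, hG v]

theorem IsDet.eq_zero {N : ℕ} {L : Fin N → Module.Dual ℝ V} {F : V [⋀^Fin N]→ₗ[ℝ] ℝ}
    (hF : IsDet L F) {i j : Fin N} (hij : i ≠ j) (hL : L i = L j) : F = 0 := by
  refine AlternatingMap.ext fun v => ?_
  rw [hF.eval v]
  have : (Matrix.of fun i j => L i (v j)) i = (Matrix.of fun i j => L i (v j)) j := by
    funext c; simp [hL]
  simp [Matrix.det_zero_of_row_eq hij this]

theorem IsDet.congr_rows {N : ℕ} {L L' : Fin N → Module.Dual ℝ V} {F : V [⋀^Fin N]→ₗ[ℝ] ℝ}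
    (hF : IsDet L F) (hL : L = L') : IsDet L' F := hL ▸ hF


set_option synthInstance.maxHeartbeats 1000000 in
theorem wedge_eq_comp {k l : ℕ} (f : V [⋀^Fin k]→ₗ[ℝ] ℝ) (g : V [⋀^Fin l]→ₗ[ℝ] ℝ) :
    wedge f g = ((TensorProduct.lid ℝ ℝ).toLinearMap.compAlternatingMap
      (AlternatingMap.domCoprod' (f ⊗ₜ[ℝ] g))).domDomCongr finSumFinEquiv := by
  rw [AlternatingMap.domCoprod'_apply]; rfl

set_option synthInstance.maxHeartbeats 1000000 in
theorem wedge_zero_right {k l : ℕ} (f : V [⋀^Fin k]→ₗ[ℝ] ℝ) :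
    wedge f (0 : V [⋀^Fin l]→ₗ[ℝ] ℝ) = 0 := by
  rw [wedge_eq_comp, TensorProduct.tmul_zero, map_zero]
  ext v
  simp

set_option synthInstance.maxHeartbeats 1000000 in
theorem wedge_zero_left {k l : ℕ} (g : V [⋀^Fin l]→ₗ[ℝ] ℝ) :
    wedge (0 : V [⋀^Fin k]→ₗ[ℝ] ℝ) g = 0 := by
  rw [wedge_eq_comp, TensorProduct.zero_tmul, map_zero]
  ext v
  simp

set_option synthInstance.maxHeartbeats 1000000 in
theorem wedge_sub_right {k l : ℕ} (f : V [⋀^Fin k]→ₗ[ℝ] ℝ) (g h : V [⋀^Fin l]→ₗ[ℝ] ℝ) :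
    wedge f (g - h) = wedge f g - wedge f h := by
  rw [wedge_eq_comp, wedge_eq_comp f g, wedge_eq_comp f h, TensorProduct.tmul_sub, map_sub]
  ext v
  simp



set_option synthInstance.maxHeartbeats 1000000 in
theorem wedge_neg_right {k l : ℕ} (f : V [⋀^Fin k]→ₗ[ℝ] ℝ) (g : V [⋀^Fin l]→ₗ[ℝ] ℝ) :
    wedge f (-g) = - wedge f g := by
  rw [← zero_sub, wedge_sub_right, wedge_zero_right, zero_sub]


theorem eps_tmul (x : V) (ν : V [⋀^Fin 6]→ₗ[ℝ] ℝ) :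
    eps (x ⊗ₜ[ℝ] ν) = ν.curryLeft x := rfl

end StableForms

namespace SF17
open StableForms H3H3

def Pr (i : Fin 6) : Module.Dual ℝ V6 := LinearMap.proj i
def bb : Fin 6 → V6 := fun i => Pi.basisFun ℝ (Fin 6) i

theorem ext_sorted {N : ℕ} {f g : V6 [⋀^Fin N]→ₗ[ℝ] ℝ}
    (h : ∀ v : Fin N → Fin 6, StrictMono v →
      (f fun i => bb (v i)) = g fun i => bb (v i)) : f = g := by
  refine Basis.ext_alternating (Pi.basisFun ℝ (Fin 6)) fun v hv => ?_
  show (f fun i => bb (v i)) = g fun i => bb (v i)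
  classical
  set s : Finset (Fin 6) := Finset.image v Finset.univ with hs
  have hcard : s.card = N := by
    rw [hs, Finset.card_image_of_injective _ hv, Finset.card_univ, Fintype.card_fin]
  set w := s.orderIsoOfFin hcard with hw
  have hmem : ∀ i, v i ∈ s := fun i => Finset.mem_image_of_mem v (Finset.mem_univ i)
  have hσbij : Function.Bijective (fun i => w.symm ⟨v i, hmem i⟩) := by
    rw [Fintype.bijective_iff_injective_and_card]
    exact ⟨fun a c hac => hv (by simpa using congrArg (fun x => (w x : Fin 6)) hac), rfl⟩
  set σ : Equiv.Perm (Fin N) := Equiv.ofBijective _ hσbij with hσdef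
  have hvw : ∀ i, v i = (w (σ i) : Fin 6) := by
    intro i
    rw [hσdef]
    simp [Equiv.ofBijective_apply]
  have hmono : StrictMono (fun i => (w i : Fin 6)) := fun a c hac => by
    exact_mod_cast w.lt_iff_lt.2 hac
  have key := h _ hmono
  have h1 : (fun i => bb (v i)) = (fun i => bb ((w i : Fin 6))) ∘ σ := by
    funext i; simp [hvw i]
  rw [h1, AlternatingMap.map_perm, AlternatingMap.map_perm, key]

theorem sixform_ext {φ : V6 [⋀^Fin 6]→ₗ[ℝ] ℝ} (h : φ bb = 0) : φ = 0 := by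
  refine Basis.ext_alternating (Pi.basisFun ℝ (Fin 6)) fun v hv => ?_
  show (φ fun i => bb (v i)) = (0 : V6 [⋀^Fin 6]→ₗ[ℝ] ℝ) fun i => bb (v i)
  have hbij : Function.Bijective v := by
    rw [Fintype.bijective_iff_injective_and_card]; exact ⟨hv, rfl⟩
  have : (fun i => bb (v i)) = bb ∘ (Equiv.ofBijective v hbij) := rfl
  rw [this, AlternatingMap.map_perm]
  have : φ bb = 0 := h
  simp [show (φ fun i => bb i) = 0 from h]


theorem Pr_bb (i j : Fin 6) : Pr i (bb j) = if i = j then 1 else 0 := by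
  by_cases h : i = j <;>
    simp [Pr, bb, Pi.basisFun_apply, Pi.single_apply, h, eq_comm]

theorem ap11 {α : Type*} (a b : α) : Fin.append ![a] ![b] = ![a, b] := by
  funext i; fin_cases i <;> rfl

theorem ap12 {α : Type*} (a b c : α) : Fin.append ![a] ![b, c] = ![a, b, c] := by
  funext i; fin_cases i <;> rfl

theorem ap13 {α : Type*} (a b c d : α) : Fin.append ![a] ![b, c, d] = ![a, b, c, d] := by
  funext i; fin_cases i <;> rfl

theorem ap22 {α : Type*} (a b c d : α) : Fin.append ![a, b] ![c, d] = ![a, b, c, d] := by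
  funext i; fin_cases i <;> rfl

theorem ap21 {α : Type*} (a b c : α) : Fin.append ![a, b] ![c] = ![a, b, c] := by
  funext i; fin_cases i <;> rfl

theorem ap31 {α : Type*} (a b c d : α) : Fin.append ![a, b, c] ![d] = ![a, b, c, d] := by
  funext i; fin_cases i <;> rfl




theorem altsum_apply {α : Type*} {N : ℕ} (s : Finset α) (F : α → (V6 [⋀^Fin N]→ₗ[ℝ] ℝ))
    (v : Fin N → V6) : (∑ t ∈ s, F t) v = ∑ t ∈ s, F t v := by
  classical
  induction s using Finset.induction with
  | empty => simp
  | insert _ _ h ih => rw [Finset.sum_insert h, Finset.sum_insert h, AlternatingMap.add_apply, ih]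

def W2 (i j : Fin 6) : V6 [⋀^Fin 2]→ₗ[ℝ] ℝ := wedge (p i) (p j)
def W3 (i j k : Fin 6) : V6 [⋀^Fin 3]→ₗ[ℝ] ℝ := wedge (p i) (W2 j k)

theorem isDet_p (i : Fin 6) : IsDet ![Pr i] (p i) := isDet_oneForm (Pr i)

theorem isDet_W2 (i j : Fin 6) : IsDet ![Pr i, Pr j] (W2 i j) :=
  (isDet_wedge (isDet_p i) (isDet_p j)).congr_rows (ap11 _ _)

theorem isDet_W3 (i j k : Fin 6) : IsDet ![Pr i, Pr j, Pr k] (W3 i j k) :=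
  (isDet_wedge (isDet_p i) (isDet_W2 j k)).congr_rows (ap12 _ _ _)

theorem rows4 (a b c d : Fin 6) :
    (![Pr a, Pr b, Pr c, Pr d] : Fin 4 → Module.Dual ℝ V6) = fun m => Pr (![a,b,c,d] m) := by
  funext m; fin_cases m <;> rfl

theorem isDet_pww (a b c d : Fin 6) :
    IsDet ![Pr a, Pr b, Pr c, Pr d] (wedge (p a) (wedge (p b) (W2 c d))) :=
  ((isDet_wedge (isDet_p a)
    ((isDet_wedge (isDet_p b) (isDet_W2 c d)).congr_rows (ap12 _ _ _)))).congr_rows (ap13 _ _ _ _)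

theorem isDet_pwl (a b c d : Fin 6) :
    IsDet ![Pr a, Pr b, Pr c, Pr d] (wedge (p a) (wedge (W2 b c) (p d))) :=
  ((isDet_wedge (isDet_p a)
    ((isDet_wedge (isDet_W2 b c) (isDet_p d)).congr_rows (ap21 _ _ _)))).congr_rows (ap13 _ _ _ _)

theorem isDet_ww (a b c d : Fin 6) :
    IsDet ![Pr a, Pr b, Pr c, Pr d] (wedge (W2 a b) (W2 c d)) :=
  (isDet_wedge (isDet_W2 a b) (isDet_W2 c d)).congr_rows (ap22 _ _ _ _)


def X1 : V6 [⋀^Fin 4]→ₗ[ℝ] ℝ := wedge (p 0) (wedge (p 2) (wedge (p 3) (p 4)))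
def X2 : V6 [⋀^Fin 4]→ₗ[ℝ] ℝ := wedge (p 1) (wedge (p 2) (wedge (p 3) (p 4)))
def X3 : V6 [⋀^Fin 4]→ₗ[ℝ] ℝ := wedge (wedge (p 0) (p 1)) (wedge (p 3) (p 5))
def X4 : V6 [⋀^Fin 4]→ₗ[ℝ] ℝ := wedge (wedge (p 0) (p 1)) (wedge (p 4) (p 5))
def Q4 : V6 [⋀^Fin 4]→ₗ[ℝ] ℝ := wedge (wedge (wedge (p 0) (p 1)) (p 3)) (p 4)

theorem isDet_Q : IsDet ![Pr 0, Pr 1, Pr 3, Pr 4] Q4 :=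
  (isDet_wedge ((isDet_wedge ((isDet_wedge (isDet_p 0) (isDet_p 1)).congr_rows (ap11 _ _))
    (isDet_p 3)).congr_rows (ap21 _ _ _)) (isDet_p 4)).congr_rows (ap31 _ _ _ _)

/-- zero when two row indices coincide -/
theorem zform {F : V6 [⋀^Fin 4]→ₗ[ℝ] ℝ} {a b c d : Fin 6}
    (h : IsDet ![Pr a, Pr b, Pr c, Pr d] F) (i j : Fin 4) (hij : i ≠ j)
    (hr : (![a,b,c,d] : Fin 4 → Fin 6) i = ![a,b,c,d] j) : F = 0 := by
  refine (h.congr_rows (rows4 a b c d)).eq_zero hij ?_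
  show Pr _ = Pr _
  rw [hr]

theorem eval_one {N : ℕ} {F : V6 [⋀^Fin N]→ₗ[ℝ] ℝ} {r : Fin N → Fin 6}
    (h : IsDet (fun m => Pr (r m)) F) (hinj : Function.Injective r) :
    F (fun m => bb (r m)) = 1 := by
  rw [h.eval]
  have : (Matrix.of fun i j => Pr (r i) (bb (r j))) = (1 : Matrix (Fin N) (Fin N) ℝ) := by
    funext i j
    rw [Matrix.of_apply, Pr_bb, Matrix.one_apply]
    simp [hinj.eq_iff]
  rw [this, Matrix.det_one]

theorem eval_zero {N : ℕ} {F : V6 [⋀^Fin N]→ₗ[ℝ] ℝ} {r : Fin N → Fin 6}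
    (h : IsDet (fun m => Pr (r m)) F) (c : Fin N → Fin 6) (i : Fin N)
    (hri : ∀ m, r i ≠ c m) : F (fun m => bb (c m)) = 0 := by
  rw [h.eval]
  apply Matrix.det_eq_zero_of_row_eq_zero i
  intro j
  rw [Matrix.of_apply, Pr_bb, if_neg (hri j)]

set_option maxHeartbeats 1000000 in
theorem W3_basis {i j k : Fin 6} (hij : i < j) (hjk : j < k) {v : Fin 3 → Fin 6}
    (hv : StrictMono v) : W3 i j k (fun m => bb (v m)) =
      if i = v 0 ∧ j = v 1 ∧ k = v 2 then 1 else 0 := by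
  have h01 : v 0 < v 1 := hv (by decide)
  have h12 : v 1 < v 2 := hv (by decide)
  have h02 : v 0 < v 2 := lt_trans h01 h12
  rw [(isDet_W3 i j k).eval, Matrix.det_fin_three]
  simp only [Matrix.of_apply, Matrix.cons_val', Matrix.cons_val_zero, Matrix.cons_val_one,
    Matrix.head_cons, Matrix.cons_val_two, Matrix.tail_cons, Matrix.empty_val',
    Matrix.cons_val_fin_one, Matrix.head_fin_const, Pr_bb]
  have t2 : (if i = v 0 then (1:ℝ) else 0) * (if j = v 2 then (1:ℝ) else 0) *
      (if k = v 1 then (1:ℝ) else 0) = 0 := by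
    by_cases hA : j = v 2
    · by_cases hB : k = v 1
      · exfalso; rw [← hA, ← hB] at h12; exact lt_asymm hjk h12
      · simp [hB]
    · simp [hA]
  have t3 : (if i = v 1 then (1:ℝ) else 0) * (if j = v 0 then (1:ℝ) else 0) *
      (if k = v 2 then (1:ℝ) else 0) = 0 := by
    by_cases hA : i = v 1
    · by_cases hB : j = v 0
      · exfalso; rw [← hA, ← hB] at h01; exact lt_asymm hij h01
      · simp [hB]
    · simp [hA]
  have t4 : (if i = v 1 then (1:ℝ) else 0) * (if j = v 2 then (1:ℝ) else 0) *
      (if k = v 0 then (1:ℝ) else 0) = 0 := by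
    by_cases hA : j = v 2
    · by_cases hB : k = v 0
      · exfalso; rw [← hA, ← hB] at h02; exact lt_asymm hjk h02
      · simp [hB]
    · simp [hA]
  have t5 : (if i = v 2 then (1:ℝ) else 0) * (if j = v 0 then (1:ℝ) else 0) *
      (if k = v 1 then (1:ℝ) else 0) = 0 := by
    by_cases hA : i = v 2
    · by_cases hB : j = v 0
      · exfalso; rw [← hA, ← hB] at h02; exact lt_asymm hij h02
      · simp [hB]
    · simp [hA]
  have t6 : (if i = v 2 then (1:ℝ) else 0) * (if j = v 1 then (1:ℝ) else 0) *
      (if k = v 0 then (1:ℝ) else 0) = 0 := by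
    by_cases hA : i = v 2
    · by_cases hB : j = v 1
      · exfalso; rw [← hA, ← hB] at h12; exact lt_asymm hij h12
      · simp [hB]
    · simp [hA]
  rw [t2, t3, t4, t5, t6]
  by_cases h1 : i = v 0
  · by_cases h2 : j = v 1
    · by_cases h3 : k = v 2
      · simp [h1, h2, h3]
      · simp [h1, h2, h3]
    · simp [h2]
  · simp [h1]

def T3 : Finset (Fin 6 × Fin 6 × Fin 6) := Finset.filter
  (fun t => t.1 < t.2.1 ∧ t.2.1 < t.2.2) Finset.univ

/-- coefficient of a 3-form -/
def cf (ρ : V6 [⋀^Fin 3]→ₗ[ℝ] ℝ) (t : Fin 6 × Fin 6 × Fin 6) : ℝ :=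
  ρ ![bb t.1, bb t.2.1, bb t.2.2]

theorem expand3 (ρ : V6 [⋀^Fin 3]→ₗ[ℝ] ℝ) :
    ρ = ∑ t ∈ T3, cf ρ t • W3 t.1 t.2.1 t.2.2 := by
  refine ext_sorted fun v hv => ?_
  have h01 : v 0 < v 1 := hv (by decide)
  have h12 : v 1 < v 2 := hv (by decide)
  rw [altsum_apply]
  rw [Finset.sum_eq_single (v 0, v 1, v 2)]
  · rw [AlternatingMap.smul_apply, W3_basis h01 h12 hv]
    have : (fun i => bb (v i)) = ![bb (v 0), bb (v 1), bb (v 2)] := by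
      funext m; fin_cases m <;> rfl
    simp [cf, this]
  · intro t ht hne
    obtain ⟨hA, hB⟩ := (Finset.mem_filter.1 ht).2
    rw [AlternatingMap.smul_apply, W3_basis hA hB hv]
    have : ¬(t.1 = v 0 ∧ t.2.1 = v 1 ∧ t.2.2 = v 2) := by
      rintro ⟨e1, e2, e3⟩
      exact hne (by rw [Prod.ext_iff, Prod.ext_iff]; exact ⟨e1, e2, e3⟩)
    simp [this]
  · intro h
    exact absurd (Finset.mem_filter.2 ⟨Finset.mem_univ _, h01, h12⟩) h



theorem isDet_X1 : IsDet ![Pr 0, Pr 2, Pr 3, Pr 4] X1 := isDet_pww 0 2 3 4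
theorem isDet_X2 : IsDet ![Pr 1, Pr 2, Pr 3, Pr 4] X2 := isDet_pww 1 2 3 4
theorem isDet_X3 : IsDet ![Pr 0, Pr 1, Pr 3, Pr 5] X3 := isDet_ww 0 1 3 5
theorem isDet_X4 : IsDet ![Pr 0, Pr 1, Pr 4, Pr 5] X4 := isDet_ww 0 1 4 5

theorem T3_lit : T3 = ({(0,1,2), (0,1,3), (0,1,4), (0,1,5), (0,2,3), (0,2,4), (0,2,5), (0,3,4), (0,3,5), (0,4,5), (1,2,3), (1,2,4), (1,2,5), (1,3,4), (1,3,5), (1,4,5), (2,3,4), (2,3,5), (2,4,5), (3,4,5)} : Finset (Fin 6 × Fin 6 × Fin 6)) := by decide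

set_option maxHeartbeats 4000000 in
theorem d3_any
    (d1 : (V6 [⋀^Fin 1]→ₗ[ℝ] ℝ) →ₗ[ℝ] (V6 [⋀^Fin 2]→ₗ[ℝ] ℝ))
    (d2 : (V6 [⋀^Fin 2]→ₗ[ℝ] ℝ) →ₗ[ℝ] (V6 [⋀^Fin 3]→ₗ[ℝ] ℝ))
    (d3 : (V6 [⋀^Fin 3]→ₗ[ℝ] ℝ) →ₗ[ℝ] (V6 [⋀^Fin 4]→ₗ[ℝ] ℝ))
    (hd10 : d1 (p 0) = 0) (hd11 : d1 (p 1) = 0) (hd13 : d1 (p 3) = 0) (hd14 : d1 (p 4) = 0)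
    (hd12 : d1 (p 2) = wedge (p 0) (p 1)) (hd15 : d1 (p 5) = wedge (p 3) (p 4))
    (hd2 : ∀ a b : V6 [⋀^Fin 1]→ₗ[ℝ] ℝ,
      d2 (wedge a b) = wedge (d1 a) b - wedge a (d1 b))
    (hd3 : ∀ (a : V6 [⋀^Fin 1]→ₗ[ℝ] ℝ) (b : V6 [⋀^Fin 2]→ₗ[ℝ] ℝ),
      d3 (wedge a b) = wedge (d1 a) b - wedge a (d2 b))
    (ρ : V6 [⋀^Fin 3]→ₗ[ℝ] ℝ) :
    d3 ρ = cf ρ (0,2,5) • X1 + cf ρ (1,2,5) • X2 + cf ρ (2,3,5) • X3 + cf ρ (2,4,5) • X4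
      + (cf ρ (2,3,4) + cf ρ (0,1,5)) • Q4 := by
  have h012 : d3 (W3 0 1 2) = 0 := by
    have z1 : wedge (p 0) (wedge (p 1) (wedge (p 0) (p 1))) = 0 := zform (isDet_pww 0 1 0 1) 0 2 (by decide) (by decide)
    rw [show W3 0 1 2 = wedge (p 0) (wedge (p 1) (p 2)) from rfl,
      hd3 (p 0) (wedge (p 1) (p 2)), hd2 (p 1) (p 2), hd10, hd11, hd12]
    simp only [wedge_zero_left, wedge_zero_right, wedge_sub_right, wedge_neg_right, z1, zero_sub, sub_zero, neg_neg, sub_neg_eq_add, zero_add, add_zero, neg_zero, sub_self]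
    all_goals rfl
  have h013 : d3 (W3 0 1 3) = 0 := by
    rw [show W3 0 1 3 = wedge (p 0) (wedge (p 1) (p 3)) from rfl,
      hd3 (p 0) (wedge (p 1) (p 3)), hd2 (p 1) (p 3), hd10, hd11, hd13]
    simp only [wedge_zero_left, wedge_zero_right, wedge_sub_right, wedge_neg_right, zero_sub, sub_zero, neg_neg, sub_neg_eq_add, zero_add, add_zero, neg_zero, sub_self]
    all_goals rfl
  have h014 : d3 (W3 0 1 4) = 0 := by
    rw [show W3 0 1 4 = wedge (p 0) (wedge (p 1) (p 4)) from rfl,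
      hd3 (p 0) (wedge (p 1) (p 4)), hd2 (p 1) (p 4), hd10, hd11, hd14]
    simp only [wedge_zero_left, wedge_zero_right, wedge_sub_right, wedge_neg_right, zero_sub, sub_zero, neg_neg, sub_neg_eq_add, zero_add, add_zero, neg_zero, sub_self]
    all_goals rfl
  have h015 : d3 (W3 0 1 5) = Q4 := by
    rw [show W3 0 1 5 = wedge (p 0) (wedge (p 1) (p 5)) from rfl,
      hd3 (p 0) (wedge (p 1) (p 5)), hd2 (p 1) (p 5), hd10, hd11, hd15]
    simp only [wedge_zero_left, wedge_zero_right, wedge_sub_right, wedge_neg_right, zero_sub, sub_zero, neg_neg, sub_neg_eq_add, zero_add, add_zero, neg_zero, sub_self]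
    all_goals first | rfl | exact IsDet.unique (isDet_pww 0 1 3 4) isDet_Q
  have h023 : d3 (W3 0 2 3) = 0 := by
    have z1 : wedge (p 0) (wedge (wedge (p 0) (p 1)) (p 3)) = 0 := zform (isDet_pwl 0 0 1 3) 0 1 (by decide) (by decide)
    rw [show W3 0 2 3 = wedge (p 0) (wedge (p 2) (p 3)) from rfl,
      hd3 (p 0) (wedge (p 2) (p 3)), hd2 (p 2) (p 3), hd10, hd12, hd13]
    simp only [wedge_zero_left, wedge_zero_right, wedge_sub_right, wedge_neg_right, z1, zero_sub, sub_zero, neg_neg, sub_neg_eq_add, zero_add, add_zero, neg_zero, sub_self]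
    all_goals rfl
  have h024 : d3 (W3 0 2 4) = 0 := by
    have z1 : wedge (p 0) (wedge (wedge (p 0) (p 1)) (p 4)) = 0 := zform (isDet_pwl 0 0 1 4) 0 1 (by decide) (by decide)
    rw [show W3 0 2 4 = wedge (p 0) (wedge (p 2) (p 4)) from rfl,
      hd3 (p 0) (wedge (p 2) (p 4)), hd2 (p 2) (p 4), hd10, hd12, hd14]
    simp only [wedge_zero_left, wedge_zero_right, wedge_sub_right, wedge_neg_right, z1, zero_sub, sub_zero, neg_neg, sub_neg_eq_add, zero_add, add_zero, neg_zero, sub_self]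
    all_goals rfl
  have h025 : d3 (W3 0 2 5) = X1 := by
    have z1 : wedge (p 0) (wedge (wedge (p 0) (p 1)) (p 5)) = 0 := zform (isDet_pwl 0 0 1 5) 0 1 (by decide) (by decide)
    rw [show W3 0 2 5 = wedge (p 0) (wedge (p 2) (p 5)) from rfl,
      hd3 (p 0) (wedge (p 2) (p 5)), hd2 (p 2) (p 5), hd10, hd12, hd15]
    simp only [wedge_zero_left, wedge_zero_right, wedge_sub_right, wedge_neg_right, z1, zero_sub, sub_zero, neg_neg, sub_neg_eq_add, zero_add, add_zero, neg_zero, sub_self]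
    all_goals rfl
  have h034 : d3 (W3 0 3 4) = 0 := by
    rw [show W3 0 3 4 = wedge (p 0) (wedge (p 3) (p 4)) from rfl,
      hd3 (p 0) (wedge (p 3) (p 4)), hd2 (p 3) (p 4), hd10, hd13, hd14]
    simp only [wedge_zero_left, wedge_zero_right, wedge_sub_right, wedge_neg_right, zero_sub, sub_zero, neg_neg, sub_neg_eq_add, zero_add, add_zero, neg_zero, sub_self]
    all_goals rfl
  have h035 : d3 (W3 0 3 5) = 0 := by
    have z1 : wedge (p 0) (wedge (p 3) (wedge (p 3) (p 4))) = 0 := zform (isDet_pww 0 3 3 4) 1 2 (by decide) (by decide)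
    rw [show W3 0 3 5 = wedge (p 0) (wedge (p 3) (p 5)) from rfl,
      hd3 (p 0) (wedge (p 3) (p 5)), hd2 (p 3) (p 5), hd10, hd13, hd15]
    simp only [wedge_zero_left, wedge_zero_right, wedge_sub_right, wedge_neg_right, z1, zero_sub, sub_zero, neg_neg, sub_neg_eq_add, zero_add, add_zero, neg_zero, sub_self]
    all_goals rfl
  have h045 : d3 (W3 0 4 5) = 0 := by
    have z1 : wedge (p 0) (wedge (p 4) (wedge (p 3) (p 4))) = 0 := zform (isDet_pww 0 4 3 4) 1 3 (by decide) (by decide)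
    rw [show W3 0 4 5 = wedge (p 0) (wedge (p 4) (p 5)) from rfl,
      hd3 (p 0) (wedge (p 4) (p 5)), hd2 (p 4) (p 5), hd10, hd14, hd15]
    simp only [wedge_zero_left, wedge_zero_right, wedge_sub_right, wedge_neg_right, z1, zero_sub, sub_zero, neg_neg, sub_neg_eq_add, zero_add, add_zero, neg_zero, sub_self]
    all_goals rfl
  have h123 : d3 (W3 1 2 3) = 0 := by
    have z1 : wedge (p 1) (wedge (wedge (p 0) (p 1)) (p 3)) = 0 := zform (isDet_pwl 1 0 1 3) 0 2 (by decide) (by decide)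
    rw [show W3 1 2 3 = wedge (p 1) (wedge (p 2) (p 3)) from rfl,
      hd3 (p 1) (wedge (p 2) (p 3)), hd2 (p 2) (p 3), hd11, hd12, hd13]
    simp only [wedge_zero_left, wedge_zero_right, wedge_sub_right, wedge_neg_right, z1, zero_sub, sub_zero, neg_neg, sub_neg_eq_add, zero_add, add_zero, neg_zero, sub_self]
    all_goals rfl
  have h124 : d3 (W3 1 2 4) = 0 := by
    have z1 : wedge (p 1) (wedge (wedge (p 0) (p 1)) (p 4)) = 0 := zform (isDet_pwl 1 0 1 4) 0 2 (by decide) (by decide)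
    rw [show W3 1 2 4 = wedge (p 1) (wedge (p 2) (p 4)) from rfl,
      hd3 (p 1) (wedge (p 2) (p 4)), hd2 (p 2) (p 4), hd11, hd12, hd14]
    simp only [wedge_zero_left, wedge_zero_right, wedge_sub_right, wedge_neg_right, z1, zero_sub, sub_zero, neg_neg, sub_neg_eq_add, zero_add, add_zero, neg_zero, sub_self]
    all_goals rfl
  have h125 : d3 (W3 1 2 5) = X2 := by
    have z1 : wedge (p 1) (wedge (wedge (p 0) (p 1)) (p 5)) = 0 := zform (isDet_pwl 1 0 1 5) 0 2 (by decide) (by decide)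
    rw [show W3 1 2 5 = wedge (p 1) (wedge (p 2) (p 5)) from rfl,
      hd3 (p 1) (wedge (p 2) (p 5)), hd2 (p 2) (p 5), hd11, hd12, hd15]
    simp only [wedge_zero_left, wedge_zero_right, wedge_sub_right, wedge_neg_right, z1, zero_sub, sub_zero, neg_neg, sub_neg_eq_add, zero_add, add_zero, neg_zero, sub_self]
    all_goals rfl
  have h134 : d3 (W3 1 3 4) = 0 := by
    rw [show W3 1 3 4 = wedge (p 1) (wedge (p 3) (p 4)) from rfl,
      hd3 (p 1) (wedge (p 3) (p 4)), hd2 (p 3) (p 4), hd11, hd13, hd14]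
    simp only [wedge_zero_left, wedge_zero_right, wedge_sub_right, wedge_neg_right, zero_sub, sub_zero, neg_neg, sub_neg_eq_add, zero_add, add_zero, neg_zero, sub_self]
    all_goals rfl
  have h135 : d3 (W3 1 3 5) = 0 := by
    have z1 : wedge (p 1) (wedge (p 3) (wedge (p 3) (p 4))) = 0 := zform (isDet_pww 1 3 3 4) 1 2 (by decide) (by decide)
    rw [show W3 1 3 5 = wedge (p 1) (wedge (p 3) (p 5)) from rfl,
      hd3 (p 1) (wedge (p 3) (p 5)), hd2 (p 3) (p 5), hd11, hd13, hd15]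
    simp only [wedge_zero_left, wedge_zero_right, wedge_sub_right, wedge_neg_right, z1, zero_sub, sub_zero, neg_neg, sub_neg_eq_add, zero_add, add_zero, neg_zero, sub_self]
    all_goals rfl
  have h145 : d3 (W3 1 4 5) = 0 := by
    have z1 : wedge (p 1) (wedge (p 4) (wedge (p 3) (p 4))) = 0 := zform (isDet_pww 1 4 3 4) 1 3 (by decide) (by decide)
    rw [show W3 1 4 5 = wedge (p 1) (wedge (p 4) (p 5)) from rfl,
      hd3 (p 1) (wedge (p 4) (p 5)), hd2 (p 4) (p 5), hd11, hd14, hd15]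
    simp only [wedge_zero_left, wedge_zero_right, wedge_sub_right, wedge_neg_right, z1, zero_sub, sub_zero, neg_neg, sub_neg_eq_add, zero_add, add_zero, neg_zero, sub_self]
    all_goals rfl
  have h234 : d3 (W3 2 3 4) = Q4 := by
    rw [show W3 2 3 4 = wedge (p 2) (wedge (p 3) (p 4)) from rfl,
      hd3 (p 2) (wedge (p 3) (p 4)), hd2 (p 3) (p 4), hd12, hd13, hd14]
    simp only [wedge_zero_left, wedge_zero_right, wedge_sub_right, wedge_neg_right, zero_sub, sub_zero, neg_neg, sub_neg_eq_add, zero_add, add_zero, neg_zero, sub_self]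
    all_goals first | rfl | exact IsDet.unique (isDet_ww 0 1 3 4) isDet_Q
  have h235 : d3 (W3 2 3 5) = X3 := by
    have z1 : wedge (p 2) (wedge (p 3) (wedge (p 3) (p 4))) = 0 := zform (isDet_pww 2 3 3 4) 1 2 (by decide) (by decide)
    rw [show W3 2 3 5 = wedge (p 2) (wedge (p 3) (p 5)) from rfl,
      hd3 (p 2) (wedge (p 3) (p 5)), hd2 (p 3) (p 5), hd12, hd13, hd15]
    simp only [wedge_zero_left, wedge_zero_right, wedge_sub_right, wedge_neg_right, z1, zero_sub, sub_zero, neg_neg, sub_neg_eq_add, zero_add, add_zero, neg_zero, sub_self]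
    all_goals rfl
  have h245 : d3 (W3 2 4 5) = X4 := by
    have z1 : wedge (p 2) (wedge (p 4) (wedge (p 3) (p 4))) = 0 := zform (isDet_pww 2 4 3 4) 1 3 (by decide) (by decide)
    rw [show W3 2 4 5 = wedge (p 2) (wedge (p 4) (p 5)) from rfl,
      hd3 (p 2) (wedge (p 4) (p 5)), hd2 (p 4) (p 5), hd12, hd14, hd15]
    simp only [wedge_zero_left, wedge_zero_right, wedge_sub_right, wedge_neg_right, z1, zero_sub, sub_zero, neg_neg, sub_neg_eq_add, zero_add, add_zero, neg_zero, sub_self]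
    all_goals rfl
  have h345 : d3 (W3 3 4 5) = 0 := by
    have z1 : wedge (p 3) (wedge (p 4) (wedge (p 3) (p 4))) = 0 := zform (isDet_pww 3 4 3 4) 1 3 (by decide) (by decide)
    rw [show W3 3 4 5 = wedge (p 3) (wedge (p 4) (p 5)) from rfl,
      hd3 (p 3) (wedge (p 4) (p 5)), hd2 (p 4) (p 5), hd13, hd14, hd15]
    simp only [wedge_zero_left, wedge_zero_right, wedge_sub_right, wedge_neg_right, z1, zero_sub, sub_zero, neg_neg, sub_neg_eq_add, zero_add, add_zero, neg_zero, sub_self]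
    all_goals rfl
  conv_lhs => rw [expand3 ρ]
  rw [map_sum, T3_lit]
  rw [Finset.sum_insert (by decide), Finset.sum_insert (by decide), Finset.sum_insert (by decide),
    Finset.sum_insert (by decide), Finset.sum_insert (by decide), Finset.sum_insert (by decide),
    Finset.sum_insert (by decide), Finset.sum_insert (by decide), Finset.sum_insert (by decide),
    Finset.sum_insert (by decide), Finset.sum_insert (by decide), Finset.sum_insert (by decide),
    Finset.sum_insert (by decide), Finset.sum_insert (by decide), Finset.sum_insert (by decide),
    Finset.sum_insert (by decide), Finset.sum_insert (by decide), Finset.sum_insert (by decide),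
    Finset.sum_insert (by decide), Finset.sum_singleton]
  simp only [map_smul]
  rw [h012, h013, h014, h015, h023, h024, h025, h034, h035, h045, h123, h124, h125, h134, h135, h145, h234, h235, h245, h345]
  simp only [smul_zero, add_zero, zero_add]
  module



theorem closed_coeffs
    (d1 : (V6 [⋀^Fin 1]→ₗ[ℝ] ℝ) →ₗ[ℝ] (V6 [⋀^Fin 2]→ₗ[ℝ] ℝ))
    (d2 : (V6 [⋀^Fin 2]→ₗ[ℝ] ℝ) →ₗ[ℝ] (V6 [⋀^Fin 3]→ₗ[ℝ] ℝ))
    (d3 : (V6 [⋀^Fin 3]→ₗ[ℝ] ℝ) →ₗ[ℝ] (V6 [⋀^Fin 4]→ₗ[ℝ] ℝ))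
    (hd10 : d1 (p 0) = 0) (hd11 : d1 (p 1) = 0) (hd13 : d1 (p 3) = 0) (hd14 : d1 (p 4) = 0)
    (hd12 : d1 (p 2) = wedge (p 0) (p 1)) (hd15 : d1 (p 5) = wedge (p 3) (p 4))
    (hd2 : ∀ a b : V6 [⋀^Fin 1]→ₗ[ℝ] ℝ,
      d2 (wedge a b) = wedge (d1 a) b - wedge a (d1 b))
    (hd3 : ∀ (a : V6 [⋀^Fin 1]→ₗ[ℝ] ℝ) (b : V6 [⋀^Fin 2]→ₗ[ℝ] ℝ),
      d3 (wedge a b) = wedge (d1 a) b - wedge a (d2 b))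
    (ρ : V6 [⋀^Fin 3]→ₗ[ℝ] ℝ) (hclosed : d3 ρ = 0) :
    cf ρ (0,2,5) = 0 ∧ cf ρ (1,2,5) = 0 ∧ cf ρ (2,3,5) = 0 ∧ cf ρ (2,4,5) = 0 := by
  have hd := d3_any d1 d2 d3 hd10 hd11 hd13 hd14 hd12 hd15 hd2 hd3 ρ
  rw [hclosed] at hd
  have happ : ∀ u : Fin 4 → V6, cf ρ (0,2,5) * X1 u + cf ρ (1,2,5) * X2 u
      + cf ρ (2,3,5) * X3 u + cf ρ (2,4,5) * X4 u
      + (cf ρ (2,3,4) + cf ρ (0,1,5)) * Q4 u = 0 := by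
    intro u
    have h := congrArg (fun F : V6 [⋀^Fin 4]→ₗ[ℝ] ℝ => F u) hd
    simp only [AlternatingMap.zero_apply, AlternatingMap.add_apply,
      AlternatingMap.smul_apply, smul_eq_mul] at h
    linarith
  have q1 : cf ρ (0,2,5) = 0 := by
    have h := happ (fun m => bb ((![0,2,3,4] : Fin 4 → Fin 6) m))
    rw [eval_one (isDet_X1.congr_rows (rows4 0 2 3 4)) (by decide),
      eval_zero (isDet_X2.congr_rows (rows4 1 2 3 4)) ![0,2,3,4] 0 (by decide),
      eval_zero (isDet_X3.congr_rows (rows4 0 1 3 5)) ![0,2,3,4] 1 (by decide),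
      eval_zero (isDet_X4.congr_rows (rows4 0 1 4 5)) ![0,2,3,4] 1 (by decide),
      eval_zero (isDet_Q.congr_rows (rows4 0 1 3 4)) ![0,2,3,4] 1 (by decide)] at h
    linarith
  have q2 : cf ρ (1,2,5) = 0 := by
    have h := happ (fun m => bb ((![1,2,3,4] : Fin 4 → Fin 6) m))
    rw [eval_one (isDet_X2.congr_rows (rows4 1 2 3 4)) (by decide),
      eval_zero (isDet_X1.congr_rows (rows4 0 2 3 4)) ![1,2,3,4] 0 (by decide),
      eval_zero (isDet_X3.congr_rows (rows4 0 1 3 5)) ![1,2,3,4] 0 (by decide),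
      eval_zero (isDet_X4.congr_rows (rows4 0 1 4 5)) ![1,2,3,4] 0 (by decide),
      eval_zero (isDet_Q.congr_rows (rows4 0 1 3 4)) ![1,2,3,4] 0 (by decide)] at h
    linarith
  have q3 : cf ρ (2,3,5) = 0 := by
    have h := happ (fun m => bb ((![0,1,3,5] : Fin 4 → Fin 6) m))
    rw [eval_one (isDet_X3.congr_rows (rows4 0 1 3 5)) (by decide),
      eval_zero (isDet_X1.congr_rows (rows4 0 2 3 4)) ![0,1,3,5] 1 (by decide),
      eval_zero (isDet_X2.congr_rows (rows4 1 2 3 4)) ![0,1,3,5] 1 (by decide),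
      eval_zero (isDet_X4.congr_rows (rows4 0 1 4 5)) ![0,1,3,5] 2 (by decide),
      eval_zero (isDet_Q.congr_rows (rows4 0 1 3 4)) ![0,1,3,5] 3 (by decide)] at h
    linarith
  have q4 : cf ρ (2,4,5) = 0 := by
    have h := happ (fun m => bb ((![0,1,4,5] : Fin 4 → Fin 6) m))
    rw [eval_one (isDet_X4.congr_rows (rows4 0 1 4 5)) (by decide),
      eval_zero (isDet_X1.congr_rows (rows4 0 2 3 4)) ![0,1,4,5] 1 (by decide),
      eval_zero (isDet_X2.congr_rows (rows4 1 2 3 4)) ![0,1,4,5] 1 (by decide),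
      eval_zero (isDet_X3.congr_rows (rows4 0 1 3 5)) ![0,1,4,5] 2 (by decide),
      eval_zero (isDet_Q.congr_rows (rows4 0 1 3 4)) ![0,1,4,5] 2 (by decide)] at h
    linarith
  exact ⟨q1, q2, q3, q4⟩


theorem upd0 (a b c : V6) : ![a, b, c] = Function.update ![0, b, c] 0 a := by
  funext m; fin_cases m <;> simp [Function.update]

theorem upd1 (a b c : V6) : ![a, b, c] = Function.update ![a, 0, c] 1 b := by
  funext m; fin_cases m <;> simp [Function.update]

theorem upd2 (a b c : V6) : ![a, b, c] = Function.update ![a, b, 0] 2 c := by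
  funext m; fin_cases m <;> simp [Function.update]

theorem alt_update_sum {N : ℕ} {α : Type*} (F : V6 [⋀^Fin N]→ₗ[ℝ] ℝ) (t : Finset α)
    (i : Fin N) (g : α → V6) (m : Fin N → V6) :
    F (Function.update m i (∑ a ∈ t, g a)) = ∑ a ∈ t, F (Function.update m i (g a)) :=
  F.toMultilinearMap.map_update_sum t i g m

theorem pi_expand (w : V6) : w = ∑ i : Fin 6, w i • bb i := by
  funext t
  simp only [Finset.sum_apply, Pi.smul_apply, bb, Pi.basisFun_apply, Pi.single_apply,
    smul_eq_mul, mul_ite, mul_one, mul_zero]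
  rw [Finset.sum_ite_eq Finset.univ t w]
  simp

theorem swap01 (F : V6 [⋀^Fin 3]→ₗ[ℝ] ℝ) (a b c : V6) : F ![b, a, c] = - F ![a, b, c] := by
  have h : ![b, a, c] = ![a, b, c] ∘ (Equiv.swap (0 : Fin 3) 1) := by
    funext m; fin_cases m <;> simp [Equiv.swap_apply_def] <;> rfl
  rw [h, AlternatingMap.map_swap _ _ (by decide)]

theorem swap12 (F : V6 [⋀^Fin 3]→ₗ[ℝ] ℝ) (a b c : V6) : F ![a, c, b] = - F ![a, b, c] := by
  have h : ![a, c, b] = ![a, b, c] ∘ (Equiv.swap (1 : Fin 3) 2) := by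
    funext m; fin_cases m <;> simp [Equiv.swap_apply_def] <;> rfl
  rw [h, AlternatingMap.map_swap _ _ (by decide)]

theorem swap02 (F : V6 [⋀^Fin 3]→ₗ[ℝ] ℝ) (a b c : V6) : F ![c, b, a] = - F ![a, b, c] := by
  have h : ![c, b, a] = ![a, b, c] ∘ (Equiv.swap (0 : Fin 3) 2) := by
    funext m; fin_cases m <;> simp [Equiv.swap_apply_def] <;> rfl
  rw [h, AlternatingMap.map_swap _ _ (by decide)]

theorem rho_c (ρ : V6 [⋀^Fin 3]→ₗ[ℝ] ℝ) (q1 : cf ρ (0,2,5) = 0) (q2 : cf ρ (1,2,5) = 0)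
    (q3 : cf ρ (2,3,5) = 0) (q4 : cf ρ (2,4,5) = 0) :
    ∀ x : V6, ρ ![bb 2, bb 5, x] = 0 := by
  have q1' : ρ ![bb 0, bb 2, bb 5] = 0 := q1
  have q2' : ρ ![bb 1, bb 2, bb 5] = 0 := q2
  have q3' : ρ ![bb 2, bb 3, bb 5] = 0 := q3
  have q4' : ρ ![bb 2, bb 4, bb 5] = 0 := q4
  intro x
  rw [upd2 (bb 2) (bb 5) x]
  conv_lhs => rw [show x = ∑ i : Fin 6, x i • bb i from pi_expand x]
  rw [alt_update_sum]
  refine Finset.sum_eq_zero fun i _ => ?_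
  rw [AlternatingMap.map_update_smul, ← upd2]
  have hval : ρ ![bb 2, bb 5, bb i] = 0 := by
    fin_cases i
    · show ρ ![bb 2, bb 5, bb 0] = 0
      rw [swap02, swap12, q1']; simp
    · show ρ ![bb 2, bb 5, bb 1] = 0
      rw [swap02, swap12, q2']; simp
    · show ρ ![bb 2, bb 5, bb 2] = 0
      exact AlternatingMap.map_eq_zero_of_eq _ _ (show ![bb 2, bb 5, bb 2] 0 = ![bb 2, bb 5, bb 2] 2 from rfl) (by decide)
    · show ρ ![bb 2, bb 5, bb 3] = 0
      rw [swap12, q3']; simp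
    · show ρ ![bb 2, bb 5, bb 4] = 0
      rw [swap12, q4']; simp
    · show ρ ![bb 2, bb 5, bb 5] = 0
      exact AlternatingMap.map_eq_zero_of_eq _ _ (show ![bb 2, bb 5, bb 5] 1 = ![bb 2, bb 5, bb 5] 2 from rfl) (by decide)
  rw [hval, smul_zero]

theorem rho_gen (ρ : V6 [⋀^Fin 3]→ₗ[ℝ] ℝ) (hc : ∀ x, ρ ![bb 2, bb 5, x] = 0) :
    ∀ (w : Fin 3 → V6) (i j : Fin 3), i ≠ j → w i = bb 2 → w j = bb 5 → ρ w = 0 := by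
  have hc1 : ∀ x, ρ ![bb 2, x, bb 5] = 0 := fun x => by rw [swap12]; simp [hc]
  have hc2 : ∀ x, ρ ![x, bb 2, bb 5] = 0 := fun x => by rw [swap01]; simp [hc1]
  have hd0 : ∀ x, ρ ![bb 5, bb 2, x] = 0 := fun x => by rw [swap01]; simp [hc]
  have hd1 : ∀ x, ρ ![bb 5, x, bb 2] = 0 := fun x => by rw [swap02]; simp [hc1]
  have hd2' : ∀ x, ρ ![x, bb 5, bb 2] = 0 := fun x => by rw [swap12]; simp [hc2]
  intro w i j hij h2 h5
  have hw : ρ w = ρ ![w 0, w 1, w 2] := by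
    congr 1; funext m; fin_cases m <;> rfl
  fin_cases i <;> fin_cases j
  · exact absurd rfl hij
  · rw [hw, show w 0 = bb 2 from h2, show w 1 = bb 5 from h5]; exact hc _
  · rw [hw, show w 0 = bb 2 from h2, show w 2 = bb 5 from h5]; exact hc1 _
  · rw [hw, show w 1 = bb 2 from h2, show w 0 = bb 5 from h5]; exact hd0 _
  · exact absurd rfl hij
  · rw [hw, show w 1 = bb 2 from h2, show w 2 = bb 5 from h5]; exact hc2 _
  · rw [hw, show w 2 = bb 2 from h2, show w 0 = bb 5 from h5]; exact hd1 _
  · rw [hw, show w 2 = bb 2 from h2, show w 1 = bb 5 from h5]; exact hd2' _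
  · exact absurd rfl hij

set_option maxHeartbeats 1000000 in
theorem rhs_vanish (ρ : V6 [⋀^Fin 3]→ₗ[ℝ] ℝ) (x y : V6)
    (hxy : ∀ (w : Fin 3 → V6) (i j : Fin 3), i ≠ j → w i = x → w j = y → ρ w = 0)
    (u : Fin 5 → V6) (i0 i1 : Fin 5) (hne : i0 ≠ i1) (hu0 : u i0 = x) (hu1 : u i1 = y) :
    wedge (ρ.curryLeft x) ρ u = 0 := by
  rw [wedge_apply]
  rw [Finset.sum_eq_zero, mul_zero]
  intro σ _
  set n0 : Fin 2 ⊕ Fin 3 := finSumFinEquiv.symm i0 with hn0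
  set n1 : Fin 2 ⊕ Fin 3 := finSumFinEquiv.symm i1 with hn1
  have hnn : n0 ≠ n1 := fun h => hne (by
    have := congrArg finSumFinEquiv h
    simpa [hn0, hn1] using this)
  rcases hA : σ⁻¹ n0 with a | a
  · have ha : σ (Sum.inl a) = n0 := by rw [← hA]; simp
    have hz : (ρ.curryLeft x) (fun i => u (finSumFinEquiv (σ (Sum.inl i)))) = 0 := by
      show ρ (Matrix.vecCons x fun i => u (finSumFinEquiv (σ (Sum.inl i)))) = 0
      refine AlternatingMap.map_eq_zero_of_eq _ _ (i := 0) (j := a.succ) ?_ (Fin.succ_ne_zero a).symm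
      rw [Matrix.cons_val_zero, Matrix.cons_val_succ, ha]
      rw [hn0, Equiv.apply_symm_apply, hu0]
    rw [hz, zero_mul, mul_zero]
  · have ha : σ (Sum.inr a) = n0 := by rw [← hA]; simp
    rcases hB : σ⁻¹ n1 with b | b
    · have hb : σ (Sum.inl b) = n1 := by rw [← hB]; simp
      have hz : (ρ.curryLeft x) (fun i => u (finSumFinEquiv (σ (Sum.inl i)))) = 0 := by
        show ρ (Matrix.vecCons x fun i => u (finSumFinEquiv (σ (Sum.inl i)))) = 0
        refine hxy _ 0 b.succ (Fin.succ_ne_zero b).symm (Matrix.cons_val_zero _ _) ?_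
        rw [Matrix.cons_val_succ, hb, hn1, Equiv.apply_symm_apply, hu1]
      rw [hz, zero_mul, mul_zero]
    · have hb : σ (Sum.inr b) = n1 := by rw [← hB]; simp
      have hab : a ≠ b := fun h => hnn (by rw [← ha, ← hb, h])
      have hz : ρ (fun i => u (finSumFinEquiv (σ (Sum.inr i)))) = 0 := by
        refine hxy _ a b hab ?_ ?_
        · rw [ha, hn0, Equiv.apply_symm_apply, hu0]
        · rw [hb, hn1, Equiv.apply_symm_apply, hu1]
      rw [hz, mul_zero, mul_zero]

theorem comp_zero (φ : V6 [⋀^Fin 6]→ₗ[ℝ] ℝ) (hφ : φ ≠ 0) (z : V6) (d : Fin 6) (c : Fin 5 → Fin 6)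
    (hcov : ∀ i : Fin 6, i ≠ d → ∃ m : Fin 5, c m = i)
    (hbij : Function.Bijective (Matrix.vecCons d c))
    (hvan : φ.curryLeft z (fun m => bb (c m)) = 0) : z d = 0 := by
  have hφbb : φ bb ≠ 0 := fun h => hφ (sixform_ext h)
  have h1 : φ.curryLeft z (fun m => bb (c m)) =
      ∑ i : Fin 6, z i • φ.curryLeft (bb i) (fun m => bb (c m)) := by
    conv_lhs => rw [show z = ∑ i : Fin 6, z i • bb i from pi_expand z]
    rw [map_sum, altsum_apply]
    refine Finset.sum_congr rfl fun i _ => ?_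
    rw [map_smul, AlternatingMap.smul_apply]
  rw [hvan] at h1
  have h2 : ∀ i : Fin 6, i ≠ d → φ.curryLeft (bb i) (fun m => bb (c m)) = 0 := by
    intro i hid
    obtain ⟨m, hm⟩ := hcov i hid
    show φ (Matrix.vecCons (bb i) fun m => bb (c m)) = 0
    refine AlternatingMap.map_eq_zero_of_eq _ _ (i := 0) (j := m.succ) ?_ (Fin.succ_ne_zero m).symm
    rw [Matrix.cons_val_zero, Matrix.cons_val_succ, hm]
  rw [Finset.sum_eq_single d (fun i _ hid => by rw [h2 i hid, smul_zero]) (by simp)] at h1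
  have htup : (Matrix.vecCons (bb d) fun m => bb (c m)) = fun m => bb ((Matrix.vecCons d c) m) := by
    funext m
    refine Fin.cases ?_ (fun i => ?_) m <;> simp
  have hperm : φ.curryLeft (bb d) (fun m => bb (c m)) =
      Equiv.Perm.sign (Equiv.ofBijective _ hbij) • φ bb := by
    show φ (Matrix.vecCons (bb d) fun m => bb (c m)) = _
    rw [htup]
    have h3 : (fun m => bb (Matrix.vecCons d c m)) = bb ∘ (Equiv.ofBijective _ hbij) := rfl
    rw [h3, AlternatingMap.map_perm]
  rcases Int.units_eq_one_or (Equiv.Perm.sign (Equiv.ofBijective _ hbij)) with hs | hs <;>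
    rw [hperm, hs] at h1
  · simp only [one_smul, smul_eq_mul] at h1
    exact (mul_eq_zero.1 h1.symm).resolve_right hφbb
  · simp only [Units.neg_smul, one_smul, smul_neg, smul_eq_mul] at h1
    rcases mul_eq_zero.1 h1.symm with h | h
    · exact h
    · exact absurd (neg_eq_zero.1 h) hφbb

theorem exp0 (F : V6 [⋀^Fin 3]→ₗ[ℝ] ℝ) (y z w₁ w₂ : V6) (s t : ℝ) :
    F ![s • y + t • z, w₁, w₂] = s • F ![y, w₁, w₂] + t • F ![z, w₁, w₂] := by
  rw [upd0 (s • y + t • z) w₁ w₂, AlternatingMap.map_update_add,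
    AlternatingMap.map_update_smul, AlternatingMap.map_update_smul, ← upd0, ← upd0]

theorem exp1 (F : V6 [⋀^Fin 3]→ₗ[ℝ] ℝ) (x y z w : V6) (s t : ℝ) :
    F ![x, s • y + t • z, w] = s • F ![x, y, w] + t • F ![x, z, w] := by
  rw [upd1 x (s • y + t • z) w, AlternatingMap.map_update_add,
    AlternatingMap.map_update_smul, AlternatingMap.map_update_smul, ← upd1, ← upd1]

theorem exp2 (F : V6 [⋀^Fin 3]→ₗ[ℝ] ℝ) (x y z w : V6) (s t : ℝ) :
    F ![x, w, s • y + t • z] = s • F ![x, w, y] + t • F ![x, w, z] := by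
  rw [upd2 x w (s • y + t • z), AlternatingMap.map_update_add,
    AlternatingMap.map_update_smul, AlternatingMap.map_update_smul, ← upd2, ← upd2]

end SF17

end

/-!
STATEMENT 17: Let `𝔤 = 𝔥₃ ⊕ 𝔥₃`, oriented by `e¹∧e²∧e³∧f¹∧f²∧f³`, and let `ρ ∈ Λ³𝔤*` be
a closed stable 3-form (`dρ = 0`, `λ(ρ) ≠ 0`).  Then the 4-form `d(J_ρ^*ρ)` lies in
`Λ⁴U`, where `U = ker(d : Λ¹𝔤* → Λ²𝔤*) = span{e¹, e², f¹, f²}` and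
`(J_ρ^*ρ)(x,y,z) = ρ(J_ρ x, J_ρ y, J_ρ z)`.

The Chevalley–Eilenberg differential `d` is hypothesised in degrees `1, 2, 3` through its
(uniquely determining) characterising properties as an antiderivation of degree `+1`.
-/

open StableForms H3H3 in
theorem stmt17
    (d1 : (V6 [⋀^Fin 1]→ₗ[ℝ] ℝ) →ₗ[ℝ] (V6 [⋀^Fin 2]→ₗ[ℝ] ℝ))
    (d2 : (V6 [⋀^Fin 2]→ₗ[ℝ] ℝ) →ₗ[ℝ] (V6 [⋀^Fin 3]→ₗ[ℝ] ℝ))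
    (d3 : (V6 [⋀^Fin 3]→ₗ[ℝ] ℝ) →ₗ[ℝ] (V6 [⋀^Fin 4]→ₗ[ℝ] ℝ))
    (hd10 : d1 (p 0) = 0) (hd11 : d1 (p 1) = 0) (hd13 : d1 (p 3) = 0) (hd14 : d1 (p 4) = 0)
    (hd12 : d1 (p 2) = wedge (p 0) (p 1)) (hd15 : d1 (p 5) = wedge (p 3) (p 4))
    (hd2 : ∀ a b : V6 [⋀^Fin 1]→ₗ[ℝ] ℝ,
      d2 (wedge a b) = wedge (d1 a) b - wedge a (d1 b))
    (hd3 : ∀ (a : V6 [⋀^Fin 1]→ₗ[ℝ] ℝ) (b : V6 [⋀^Fin 2]→ₗ[ℝ] ℝ),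
      d3 (wedge a b) = wedge (d1 a) b - wedge a (d2 b))
    (ρ : V6 [⋀^Fin 3]→ₗ[ℝ] ℝ) (hclosed : d3 ρ = 0)
    (K : V6 →ₗ[ℝ] V6 ⊗[ℝ] (V6 [⋀^Fin 6]→ₗ[ℝ] ℝ)) (hK : IsK ρ K)
    (hstable : lam K ≠ 0)
    (o : Orientation ℝ V6 (Fin 6)) (ho : ∃ hE : E6 ≠ 0, rayOfNeZero ℝ E6 hE = o)
    (φ : V6 [⋀^Fin 6]→ₗ[ℝ] ℝ) (hφ : IsVolOf o K φ)
    (J : V6 →ₗ[ℝ] V6) (hJ : IsJ K φ J) :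
    d3 (ρ.compLinearMap J) ∈ quadU := by
  obtain ⟨q1, q2, q3, q4⟩ :=
    SF17.closed_coeffs d1 d2 d3 hd10 hd11 hd13 hd14 hd12 hd15 hd2 hd3 ρ hclosed
  obtain ⟨hφne, -⟩ := hφ.1
  have hcφ : ∀ v : V6, φ.curryLeft (J v) = wedge (ρ.curryLeft v) ρ := by
    intro v
    have h := hK v
    rwa [hJ v, eps_tmul] at h
  have hc := SF17.rho_c ρ q1 q2 q3 q4
  have hg := SF17.rho_gen ρ hc
  have hg' : ∀ (w : Fin 3 → V6) (i j : Fin 3), i ≠ j → w i = SF17.bb 5 → w j = SF17.bb 2 →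
      ρ w = 0 := fun w i j hij h5 h2 => hg w j i (Ne.symm hij) h2 h5
  have hvan2 : ∀ (c : Fin 5 → Fin 6), c 0 = 2 → c 1 = 5 →
      φ.curryLeft (J (SF17.bb 2)) (fun m => SF17.bb (c m)) = 0 := by
    intro c h0 h1
    rw [hcφ (SF17.bb 2)]
    refine SF17.rhs_vanish ρ (SF17.bb 2) (SF17.bb 5) hg (fun m => SF17.bb (c m)) 0 1
      (by decide) ?_ ?_
    · show SF17.bb (c 0) = SF17.bb 2
      rw [h0]
    · show SF17.bb (c 1) = SF17.bb 5
      rw [h1]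
  have hvan5 : ∀ (c : Fin 5 → Fin 6), c 0 = 2 → c 1 = 5 →
      φ.curryLeft (J (SF17.bb 5)) (fun m => SF17.bb (c m)) = 0 := by
    intro c h0 h1
    rw [hcφ (SF17.bb 5)]
    refine SF17.rhs_vanish ρ (SF17.bb 5) (SF17.bb 2) hg' (fun m => SF17.bb (c m)) 1 0
      (by decide) ?_ ?_
    · show SF17.bb (c 1) = SF17.bb 5
      rw [h1]
    · show SF17.bb (c 0) = SF17.bb 2
      rw [h0]
  have J2span : J (SF17.bb 2) =
      (J (SF17.bb 2) 2) • SF17.bb 2 + (J (SF17.bb 2) 5) • SF17.bb 5 := by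
    have e0 := SF17.comp_zero φ hφne (J (SF17.bb 2)) 0 ![2,5,1,3,4] (by decide) (by decide)
      (hvan2 ![2,5,1,3,4] rfl rfl)
    have e1 := SF17.comp_zero φ hφne (J (SF17.bb 2)) 1 ![2,5,0,3,4] (by decide) (by decide)
      (hvan2 ![2,5,0,3,4] rfl rfl)
    have e3 := SF17.comp_zero φ hφne (J (SF17.bb 2)) 3 ![2,5,0,1,4] (by decide) (by decide)
      (hvan2 ![2,5,0,1,4] rfl rfl)
    have e4 := SF17.comp_zero φ hφne (J (SF17.bb 2)) 4 ![2,5,0,1,3] (by decide) (by decide)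
      (hvan2 ![2,5,0,1,3] rfl rfl)
    funext t
    fin_cases t
    · show J (SF17.bb 2) 0 = _
      rw [e0]
      simp [SF17.bb, Pi.basisFun_apply, Pi.single_apply]
    · show J (SF17.bb 2) 1 = _
      rw [e1]
      simp [SF17.bb, Pi.basisFun_apply, Pi.single_apply]
    · show J (SF17.bb 2) 2 = _
      simp [SF17.bb, Pi.basisFun_apply, Pi.single_apply]
    · show J (SF17.bb 2) 3 = _
      rw [e3]
      simp [SF17.bb, Pi.basisFun_apply, Pi.single_apply]
    · show J (SF17.bb 2) 4 = _
      rw [e4]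
      simp [SF17.bb, Pi.basisFun_apply, Pi.single_apply]
    · show J (SF17.bb 2) 5 = _
      simp [SF17.bb, Pi.basisFun_apply, Pi.single_apply]
  have J5span : J (SF17.bb 5) =
      (J (SF17.bb 5) 2) • SF17.bb 2 + (J (SF17.bb 5) 5) • SF17.bb 5 := by
    have e0 := SF17.comp_zero φ hφne (J (SF17.bb 5)) 0 ![2,5,1,3,4] (by decide) (by decide)
      (hvan5 ![2,5,1,3,4] rfl rfl)
    have e1 := SF17.comp_zero φ hφne (J (SF17.bb 5)) 1 ![2,5,0,3,4] (by decide) (by decide)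
      (hvan5 ![2,5,0,3,4] rfl rfl)
    have e3 := SF17.comp_zero φ hφne (J (SF17.bb 5)) 3 ![2,5,0,1,4] (by decide) (by decide)
      (hvan5 ![2,5,0,1,4] rfl rfl)
    have e4 := SF17.comp_zero φ hφne (J (SF17.bb 5)) 4 ![2,5,0,1,3] (by decide) (by decide)
      (hvan5 ![2,5,0,1,3] rfl rfl)
    funext t
    fin_cases t
    · show J (SF17.bb 5) 0 = _
      rw [e0]
      simp [SF17.bb, Pi.basisFun_apply, Pi.single_apply]
    · show J (SF17.bb 5) 1 = _
      rw [e1]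
      simp [SF17.bb, Pi.basisFun_apply, Pi.single_apply]
    · show J (SF17.bb 5) 2 = _
      simp [SF17.bb, Pi.basisFun_apply, Pi.single_apply]
    · show J (SF17.bb 5) 3 = _
      rw [e3]
      simp [SF17.bb, Pi.basisFun_apply, Pi.single_apply]
    · show J (SF17.bb 5) 4 = _
      rw [e4]
      simp [SF17.bb, Pi.basisFun_apply, Pi.single_apply]
    · show J (SF17.bb 5) 5 = _
      simp [SF17.bb, Pi.basisFun_apply, Pi.single_apply]
  have hts : ∀ x : V6, ρ ![x, J (SF17.bb 2), J (SF17.bb 5)] = 0 := by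
    intro x
    rw [J2span, J5span, SF17.exp1, SF17.exp2, SF17.exp2]
    have z1 : ρ ![x, SF17.bb 2, SF17.bb 2] = 0 :=
      AlternatingMap.map_eq_zero_of_eq _ _ (i := 1) (j := 2) rfl (by decide)
    have z2 : ρ ![x, SF17.bb 2, SF17.bb 5] = 0 := hg _ 1 2 (by decide) rfl rfl
    have z3 : ρ ![x, SF17.bb 5, SF17.bb 2] = 0 := hg _ 2 1 (by decide) rfl rfl
    have z4 : ρ ![x, SF17.bb 5, SF17.bb 5] = 0 :=
      AlternatingMap.map_eq_zero_of_eq _ _ (i := 1) (j := 2) rfl (by decide)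
    rw [z1, z2, z3, z4]
    simp
  have hts2 : ∀ x : V6, ρ ![J (SF17.bb 2), x, J (SF17.bb 5)] = 0 := by
    intro x
    rw [J2span, J5span, SF17.exp0, SF17.exp2, SF17.exp2]
    have z1 : ρ ![SF17.bb 2, x, SF17.bb 2] = 0 :=
      AlternatingMap.map_eq_zero_of_eq _ _ (i := 0) (j := 2) rfl (by decide)
    have z2 : ρ ![SF17.bb 2, x, SF17.bb 5] = 0 := hg _ 0 2 (by decide) rfl rfl
    have z3 : ρ ![SF17.bb 5, x, SF17.bb 2] = 0 := hg _ 2 0 (by decide) rfl rfl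
    have z4 : ρ ![SF17.bb 5, x, SF17.bb 5] = 0 :=
      AlternatingMap.map_eq_zero_of_eq _ _ (i := 0) (j := 2) rfl (by decide)
    rw [z1, z2, z3, z4]
    simp
  have c025 : SF17.cf (ρ.compLinearMap J) (0,2,5) = 0 := by
    show ρ.compLinearMap J ![SF17.bb 0, SF17.bb 2, SF17.bb 5] = 0
    rw [AlternatingMap.compLinearMap_apply]
    have ht : (fun i => J (![SF17.bb 0, SF17.bb 2, SF17.bb 5] i)) =
        ![J (SF17.bb 0), J (SF17.bb 2), J (SF17.bb 5)] := by
      funext m; fin_cases m <;> rfl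
    rw [ht]
    exact hts _
  have c125 : SF17.cf (ρ.compLinearMap J) (1,2,5) = 0 := by
    show ρ.compLinearMap J ![SF17.bb 1, SF17.bb 2, SF17.bb 5] = 0
    rw [AlternatingMap.compLinearMap_apply]
    have ht : (fun i => J (![SF17.bb 1, SF17.bb 2, SF17.bb 5] i)) =
        ![J (SF17.bb 1), J (SF17.bb 2), J (SF17.bb 5)] := by
      funext m; fin_cases m <;> rfl
    rw [ht]
    exact hts _
  have c235 : SF17.cf (ρ.compLinearMap J) (2,3,5) = 0 := by
    show ρ.compLinearMap J ![SF17.bb 2, SF17.bb 3, SF17.bb 5] = 0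
    rw [AlternatingMap.compLinearMap_apply]
    have ht : (fun i => J (![SF17.bb 2, SF17.bb 3, SF17.bb 5] i)) =
        ![J (SF17.bb 2), J (SF17.bb 3), J (SF17.bb 5)] := by
      funext m; fin_cases m <;> rfl
    rw [ht]
    exact hts2 _
  have c245 : SF17.cf (ρ.compLinearMap J) (2,4,5) = 0 := by
    show ρ.compLinearMap J ![SF17.bb 2, SF17.bb 4, SF17.bb 5] = 0
    rw [AlternatingMap.compLinearMap_apply]
    have ht : (fun i => J (![SF17.bb 2, SF17.bb 4, SF17.bb 5] i)) =
        ![J (SF17.bb 2), J (SF17.bb 4), J (SF17.bb 5)] := by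
      funext m; fin_cases m <;> rfl
    rw [ht]
    exact hts2 _
  rw [SF17.d3_any d1 d2 d3 hd10 hd11 hd13 hd14 hd12 hd15 hd2 hd3 (ρ.compLinearMap J),
    c025, c125, c235, c245]
  simp only [zero_smul, zero_add, add_zero]
  refine Submodule.smul_mem _ _ (Submodule.subset_span ?_)
  refine ⟨p 0, p 1, p 3, p 4, ?_, ?_, ?_, ?_, rfl⟩ <;>
    exact Submodule.subset_span (by simp)
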